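/- Let A(t) = t(t - t_A) and B(t) = (t - t_B)(t - 1) with 0 < t_B < t_A < 1. Then A'(t)B(t) - A(t)B'(t) < 0 for every real t. -/
import Mathlib


theorem stmt_0 (tA tB : ℝ) (h1 : 0 < tB) (h2 : tB < tA) (h3 : tA < 1)
    (A B : ℝ → ℝ)
    (hA : ∀ t, A t = t * (t - tA)) (hB : ∀ t, B t = (t - tB) * (t - 1)) :
    ∀ t : ℝ, deriv A t * B t - A t * deriv B t < 0 := by
  have hAf : A = fun t => t * (t - tA) := funext hA
  have hBf : B = fun t => (t - tB) * (t - 1) := funext hB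
  subst hAf hBf
  intro t
  have hdA : deriv (fun t : ℝ => t * (t - tA)) t = 2 * t - tA := by
    have h : HasDerivAt (fun t : ℝ => t * (t - tA)) (1 * (t - tA) + t * 1) t :=
      (hasDerivAt_id t).mul ((hasDerivAt_id t).sub_const tA)
    rw [h.deriv]; ring
  have hdB : deriv (fun t : ℝ => (t - tB) * (t - 1)) t = 2 * t - tB - 1 := by
    have h : HasDerivAt (fun t : ℝ => (t - tB) * (t - 1)) (1 * (t - 1) + (t - tB) * 1) t :=
      ((hasDerivAt_id t).sub_const tB).mul ((hasDerivAt_id t).sub_const 1)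
    rw [h.deriv]; ring
  rw [hdA, hdB]
  show (2 * t - tA) * ((t - tB) * (t - 1)) - t * (t - tA) * (2 * t - tB - 1) < 0
  nlinarith [sq_nonneg ((1 + tB - tA) * t - tB), mul_pos h1 (mul_pos (sub_pos.2 h2) (sub_pos.2 h3)), sq_nonneg t]
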